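/- arXiv:2010.10606 — 3 statements merged into one kernel-verified Lean document; each statement's English description precedes it below -/
import Mathlib

section
/- Let n, p ≥ 1, let A, 𝒜, 𝒜' be real n×n matrices, C a real p×n matrix, δ, δ' real numbers with (δ, 𝒜) ≠ (δ', 𝒜'), and N a natural number. Suppose the ((N+1)p) × 2n matrix obtained by horizontally concatenating 𝒪_N(δ, 𝒜) and 𝒪_N(δ', 𝒜') has rank 2n. Then (i) 𝒪_N(δ, 𝒜) has rank n, and (ii) for any x₀, x₀' ∈ ℝⁿ, if C(A + δ𝒜)^j x₀ = C(A + δ'𝒜')^j x₀' for every j with 0 ≤ j ≤ N, then x₀ = 0 and x₀' = 0; in particular no pair of nonzero initial states under the two distinct parameter configurations produces the same noise-free output sequence on [0, N]. -/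
open Matrix

/-- The observability matrix `𝒪_N(δ, 𝒜)`: the `((N+1)p) × n` block matrix whose
`j`-th block row is `C (A + δ 𝒜)^j`. -/
noncomputable def obsMat (n p N : ℕ) (A 𝒜 : Matrix (Fin n) (Fin n) ℝ)
    (C : Matrix (Fin p) (Fin n) ℝ) (δ : ℝ) :
    Matrix (Fin (N + 1) × Fin p) (Fin n) ℝ :=
  fun jr c => (C * (A + δ • 𝒜) ^ (jr.1 : ℕ)) jr.2 c

/-- A matrix with as many columns as its rank has injective `mulVec`. -/
lemma mulVec_inj_of_rank {m k : Type*} [Fintype m] [Fintype k] [DecidableEq k]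
    (M : Matrix m k ℝ) (h : M.rank = Fintype.card k) :
    ∀ v : k → ℝ, M.mulVec v = 0 → v = 0 := by
  intro v hv
  have hrn := LinearMap.finrank_range_add_finrank_ker M.mulVecLin
  rw [Module.finrank_fintype_fun_eq_card] at hrn
  have hR : Module.finrank ℝ (LinearMap.range M.mulVecLin) = Fintype.card k := h
  have hker : Module.finrank ℝ (LinearMap.ker M.mulVecLin) = 0 := by omega
  have : LinearMap.ker M.mulVecLin = ⊥ :=
    Submodule.finrank_eq_zero.mp hker
  have hv' : v ∈ LinearMap.ker M.mulVecLin := by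
    simpa [Matrix.mulVecLin_apply] using hv
  rw [this] at hv'
  simpa using hv'

theorem stmt_0 (n p N : ℕ) (hn : 1 ≤ n) (hp : 1 ≤ p)
    (A 𝒜 𝒜' : Matrix (Fin n) (Fin n) ℝ) (C : Matrix (Fin p) (Fin n) ℝ)
    (δ δ' : ℝ) (hne : (δ, 𝒜) ≠ (δ', 𝒜'))
    (hrank :
      (Matrix.fromCols (obsMat n p N A 𝒜 C δ) (obsMat n p N A 𝒜' C δ')).rank = 2 * n) :
    (obsMat n p N A 𝒜 C δ).rank = n ∧
      ∀ x₀ x₀' : Fin n → ℝ,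
        (∀ j : ℕ, j ≤ N →
            C.mulVec (((A + δ • 𝒜) ^ j).mulVec x₀) =
              C.mulVec (((A + δ' • 𝒜') ^ j).mulVec x₀')) →
          x₀ = 0 ∧ x₀' = 0 := by
  set M := obsMat n p N A 𝒜 C δ with hM
  set M' := obsMat n p N A 𝒜' C δ' with hM'
  -- injectivity of the concatenated matrix
  have hbig : ∀ v : (Fin n ⊕ Fin n) → ℝ, (Matrix.fromCols M M').mulVec v = 0 → v = 0 := by
    apply mulVec_inj_of_rank
    simpa [Fintype.card_sum, two_mul] using hrank
  have key : ∀ x₀ x₀' : Fin n → ℝ, M.mulVec x₀ = M'.mulVec x₀' → x₀ = 0 ∧ x₀' = 0 := by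
    intro x₀ x₀' h
    have h0 : (Matrix.fromCols M M').mulVec (Sum.elim x₀ (-x₀')) = 0 := by
      rw [Matrix.fromCols_mulVec_sumElim, Matrix.mulVec_neg, h]
      simp
    have := hbig _ h0
    constructor
    · funext i; have := congrFun this (Sum.inl i); simpa using this
    · funext i; have := congrFun this (Sum.inr i); simpa using this
  constructor
  · -- rank of M is n
    refine le_antisymm (by simpa using M.rank_le_card_width) ?_
    have hkerM : LinearMap.ker M.mulVecLin = ⊥ := by
      rw [LinearMap.ker_eq_bot']
      intro v hv
      exact (key v 0 (by simpa [Matrix.mulVecLin_apply] using hv)).1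
    have hrn := LinearMap.finrank_range_add_finrank_ker M.mulVecLin
    rw [Module.finrank_fintype_fun_eq_card, hkerM, finrank_bot] at hrn
    simp only [Fintype.card_fin, add_zero] at hrn
    exact le_of_eq hrn.symm
  · intro x₀ x₀' h
    apply key
    funext jr
    obtain ⟨j, r⟩ := jr
    have hj := h (j : ℕ) (Nat.lt_succ_iff.mp j.isLt)
    have e1 : M.mulVec x₀ (j, r) = (C.mulVec (((A + δ • 𝒜) ^ (j : ℕ)).mulVec x₀)) r := by
      rw [Matrix.mulVec_mulVec]; rfl
    have e2 : M'.mulVec x₀' (j, r) = (C.mulVec (((A + δ' • 𝒜') ^ (j : ℕ)).mulVec x₀')) r := by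
      rw [Matrix.mulVec_mulVec]; rfl
    rw [e1, e2, hj]
end

section
/- Let n, p ≥ 1, let A, 𝒜, 𝒜' be real n×n matrices, C a real p×n matrix, δ, δ' real numbers, and N a natural number. Suppose the ((N+1)p) × 2n matrix obtained by horizontally concatenating 𝒪_N(δ, 𝒜) and 𝒪_N(δ', 𝒜') has rank strictly less than 2n. Then there exist x₀, x₀' ∈ ℝⁿ, not both zero, such that C(A + δ𝒜)^j x₀ = C(A + δ'𝒜')^j x₀' for every j with 0 ≤ j ≤ N; i.e., the two configurations are indistinguishable from the noise-free output sequence on [0, N]. -/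
open Matrix

theorem stmt_1 (n p N : ℕ) (hn : 1 ≤ n) (hp : 1 ≤ p)
    (A 𝒜 𝒜' : Matrix (Fin n) (Fin n) ℝ) (C : Matrix (Fin p) (Fin n) ℝ)
    (δ δ' : ℝ)
    (hrank :
      (Matrix.fromCols (obsMat n p N A 𝒜 C δ) (obsMat n p N A 𝒜' C δ')).rank < 2 * n) :
    ∃ x₀ x₀' : Fin n → ℝ, (x₀ ≠ 0 ∨ x₀' ≠ 0) ∧
      ∀ j : ℕ, j ≤ N →
        C.mulVec (((A + δ • 𝒜) ^ j).mulVec x₀) =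
          C.mulVec (((A + δ' • 𝒜') ^ j).mulVec x₀') := by
  set M := Matrix.fromCols (obsMat n p N A 𝒜 C δ) (obsMat n p N A 𝒜' C δ')
  -- rank-nullity: kernel is nontrivial
  have hker : LinearMap.ker M.mulVecLin ≠ ⊥ := by
    intro h
    have hrn := LinearMap.finrank_range_add_finrank_ker M.mulVecLin
    rw [h, finrank_bot, add_zero] at hrn
    have hdim : Module.finrank ℝ ((Fin n ⊕ Fin n) → ℝ) = 2 * n := by
      simp [Module.finrank_pi, two_mul]
    rw [hdim] at hrn
    have hMr : M.rank = Module.finrank ℝ (LinearMap.range M.mulVecLin) := rfl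
    rw [hMr] at hrank
    omega
  obtain ⟨z, hz0, hz⟩ := Submodule.exists_mem_ne_zero_of_ne_bot hker
  have hz0' : M.mulVec z = 0 := hz0
  refine ⟨z ∘ Sum.inl, -(z ∘ Sum.inr), ?_, ?_⟩
  · by_contra h
    push_neg at h
    obtain ⟨h1, h2⟩ := h
    apply hz
    funext i
    cases i with
    | inl i => exact congrFun h1 i
    | inr i => have := congrFun h2 i; simpa using this
  · intro j hj
    have hz' : z = Sum.elim (z ∘ Sum.inl) (z ∘ Sum.inr) := by
      funext i; cases i <;> rfl
    rw [hz', Matrix.fromCols_mulVec_sumElim] at hz0'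
    have key : (obsMat n p N A 𝒜 C δ).mulVec (z ∘ Sum.inl)
        = (obsMat n p N A 𝒜' C δ').mulVec (-(z ∘ Sum.inr)) := by
      rw [Matrix.mulVec_neg]
      exact eq_neg_of_add_eq_zero_left hz0'
    funext r
    have hk := congrFun key (⟨j, Nat.lt_succ_of_le hj⟩, r)
    rw [Matrix.mulVec_mulVec, Matrix.mulVec_mulVec]
    exact hk
end

section
/- Let n, p ≥ 1, let A, 𝒜, 𝒜* be real n×n matrices, C a real p×n matrix, δ, δ* real numbers with (δ, 𝒜) ≠ (δ*, 𝒜*), and N a natural number. Suppose the ((N+1)p) × 2n matrix obtained by horizontally concatenating 𝒪_N(δ*, 𝒜*) and 𝒪_N(δ, 𝒜) has rank 2n, and let Y* = 𝒪_N(δ*, 𝒜*) x₀* for some x₀* ∈ ℝⁿ with x₀* ≠ 0. Then Y* does not lie in the column space of 𝒪_N(δ, 𝒜): there exists no x₀ ∈ ℝⁿ with Y* = 𝒪_N(δ, 𝒜) x₀. Consequently, among candidate parameter configurations satisfying the pairwise rank condition, only the true one (δ*, 𝒜*) is consistent with the noise-free output stack generated by a nonzero initial state. -/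
open Matrix

theorem stmt_3 (n p N : ℕ) (hn : 1 ≤ n) (hp : 1 ≤ p)
    (A 𝒜 𝒜s : Matrix (Fin n) (Fin n) ℝ) (C : Matrix (Fin p) (Fin n) ℝ)
    (δ δs : ℝ) (hne : (δ, 𝒜) ≠ (δs, 𝒜s))
    (hrank :
      (Matrix.fromCols (obsMat n p N A 𝒜s C δs) (obsMat n p N A 𝒜 C δ)).rank = 2 * n)
    (x₀s : Fin n → ℝ) (hx : x₀s ≠ 0)
    (Y : Fin (N + 1) × Fin p → ℝ) (hY : Y = (obsMat n p N A 𝒜s C δs).mulVec x₀s) :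
    ¬ ∃ x₀ : Fin n → ℝ, Y = (obsMat n p N A 𝒜 C δ).mulVec x₀ := by
  rintro ⟨x₀, hx0⟩
  set M := Matrix.fromCols (obsMat n p N A 𝒜s C δs) (obsMat n p N A 𝒜 C δ) with hM
  have h0 : M.mulVec (Sum.elim x₀s (-x₀)) = 0 := by
    rw [hM, fromCols_mulVec_sumElim, mulVec_neg, ← hY, ← hx0]
    simp
  -- rank-nullity: kernel is trivial
  have hcard : Fintype.card (Fin n ⊕ Fin n) = 2 * n := by
    simp [Fintype.card_sum, two_mul]
  have hrn := M.mulVecLin.finrank_range_add_finrank_ker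
  rw [show Module.finrank ℝ (Fin n ⊕ Fin n → ℝ) = 2 * n by
        rw [Module.finrank_pi]; exact hcard] at hrn
  have hkr : Module.finrank ℝ (LinearMap.ker M.mulVecLin) = 0 := by
    have : M.rank = Module.finrank ℝ (LinearMap.range M.mulVecLin) := rfl
    omega
  have hker : LinearMap.ker M.mulVecLin = ⊥ :=
    Submodule.finrank_eq_zero.mp hkr
  have : Sum.elim x₀s (-x₀) = 0 := by
    have := LinearMap.ker_eq_bot.mp hker
    exact this (by simpa using h0)
  apply hx
  funext i
  have := congrFun this (Sum.inl i)
  simpa using this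
end
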